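/- Test function computation for the Cheeger upper bound: For S ⊂ V nonempty and proper, define g(u) = vol(V∖S) for u ∈ S and g(u) = −vol(S) for u ∉ S, where vol(A) = Σ_{u∈A} q(u)φ(u)². Then Σ_u q(u) g(u) φ(u)² = 0, and the Rayleigh quotient [Σ_{{u,v}} w(u,v)φ(u)φ(v)(g(u)−g(v))²]/[Σ_u q(u) g(u)² φ(u)²] equals |∂S| (vol(S)+vol(V∖S))² / (vol(V∖S)² vol(S) + vol(S)² vol(V∖S)), which is at most 2 |∂S| / min(vol(S), vol(V∖S)). -/
import Mathlib


theorem statement6 {V : Type*} [Fintype V] [DecidableEq V]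
    (w : V → V → ℝ) (hw : ∀ u v, w u v = w v u) (hwpos : ∀ u v, 0 ≤ w u v)
    (q : V → ℝ) (hq : ∀ u, 0 < q u) (φ : V → ℝ) (hφ : ∀ u, 0 < φ u)
    (S : Finset V) (hS : S.Nonempty) (hS' : S ≠ Finset.univ)
    (g : V → ℝ)
    (hg : g = fun u => if u ∈ S then (∑ v ∈ Sᶜ, q v * φ v ^2) else -(∑ v ∈ S, q v * φ v ^2)) :
    (∑ u, q u * g u * φ u ^2) = 0 ∧
    ((1/2) * ∑ u, ∑ v, w u v * φ u * φ v * (g u - g v)^2) / (∑ u, q u * g u ^2 * φ u ^2) =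
      (∑ u ∈ S, ∑ v ∈ Sᶜ, w u v * φ u * φ v) *
        ((∑ u ∈ S, q u * φ u ^2) + (∑ u ∈ Sᶜ, q u * φ u ^2))^2 /
        ((∑ u ∈ Sᶜ, q u * φ u ^2)^2 * (∑ u ∈ S, q u * φ u ^2) +
          (∑ u ∈ S, q u * φ u ^2)^2 * (∑ u ∈ Sᶜ, q u * φ u ^2)) ∧
    (∑ u ∈ S, ∑ v ∈ Sᶜ, w u v * φ u * φ v) *
        ((∑ u ∈ S, q u * φ u ^2) + (∑ u ∈ Sᶜ, q u * φ u ^2))^2 /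
        ((∑ u ∈ Sᶜ, q u * φ u ^2)^2 * (∑ u ∈ S, q u * φ u ^2) +
          (∑ u ∈ S, q u * φ u ^2)^2 * (∑ u ∈ Sᶜ, q u * φ u ^2)) ≤
      2 * (∑ u ∈ S, ∑ v ∈ Sᶜ, w u v * φ u * φ v) /
        min (∑ u ∈ S, q u * φ u ^2) (∑ u ∈ Sᶜ, q u * φ u ^2) := by
  have hqφ : ∀ u, 0 < q u * φ u ^ 2 := fun u => mul_pos (hq u) (pow_pos (hφ u) 2)
  set a := ∑ v ∈ S, q v * φ v ^2 with ha
  set b := ∑ v ∈ Sᶜ, q v * φ v ^2 with hb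
  set E := ∑ u ∈ S, ∑ v ∈ Sᶜ, w u v * φ u * φ v with hE
  have hSc : Sᶜ.Nonempty := by
    rw [Finset.nonempty_iff_ne_empty]
    simpa [Finset.compl_eq_empty_iff] using hS'
  have hapos : 0 < a := Finset.sum_pos (fun u _ => hqφ u) hS
  have hbpos : 0 < b := Finset.sum_pos (fun u _ => hqφ u) hSc
  have hEnn : 0 ≤ E := Finset.sum_nonneg fun u _ => Finset.sum_nonneg fun v _ =>
    mul_nonneg (mul_nonneg (hwpos u v) (hφ u).le) (hφ v).le
  have hgS : ∀ u ∈ S, g u = b := fun u hu => by simp [hg, hu]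
  have hgSc : ∀ u ∈ Sᶜ, g u = -a := fun u hu => by
    simp [hg, Finset.mem_compl.mp hu]
  have h1 : (∑ u, q u * g u * φ u ^2) = 0 := by
    rw [← Finset.sum_add_sum_compl S]
    have e1 : ∑ u ∈ S, q u * g u * φ u ^ 2 = b * a := by
      rw [Finset.sum_congr rfl (fun u hu => by rw [hgS u hu]), ha, Finset.mul_sum]
      exact Finset.sum_congr rfl fun u _ => by ring
    have e2 : ∑ u ∈ Sᶜ, q u * g u * φ u ^ 2 = -a * b := by
      rw [Finset.sum_congr rfl (fun u hu => by rw [hgSc u hu]), hb, Finset.mul_sum]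
      exact Finset.sum_congr rfl fun u _ => by ring
    rw [e1, e2]; ring
  have hden : (∑ u, q u * g u ^ 2 * φ u ^2) = b ^ 2 * a + a ^ 2 * b := by
    rw [← Finset.sum_add_sum_compl S]
    have e1 : ∑ u ∈ S, q u * g u ^ 2 * φ u ^ 2 = b ^ 2 * a := by
      rw [Finset.sum_congr rfl (fun u hu => by rw [hgS u hu]), ha, Finset.mul_sum]
      exact Finset.sum_congr rfl fun u _ => by ring
    have e2 : ∑ u ∈ Sᶜ, q u * g u ^ 2 * φ u ^ 2 = a ^ 2 * b := by
      rw [Finset.sum_congr rfl (fun u hu => by rw [hgSc u hu]), hb, Finset.mul_sum]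
      exact Finset.sum_congr rfl fun u _ => by ring
    rw [e1, e2]
  have hnum : (∑ u, ∑ v : V, w u v * φ u * φ v * (g u - g v)^2) = 2 * (E * (a + b) ^ 2) := by
    have split : ∀ f : V → ℝ, (∑ v : V, f v) = ∑ v ∈ S, f v + ∑ v ∈ Sᶜ, f v := by
      intro f; rw [Finset.sum_add_sum_compl]
    rw [split]
    have blockSS : ∀ u ∈ S, ∀ v ∈ S, w u v * φ u * φ v * (g u - g v)^2 = 0 := by
      intro u hu v hv; rw [hgS u hu, hgS v hv]; ring
    have blockCC : ∀ u ∈ Sᶜ, ∀ v ∈ Sᶜ, w u v * φ u * φ v * (g u - g v)^2 = 0 := by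
      intro u hu v hv; rw [hgSc u hu, hgSc v hv]; ring
    have eS : ∑ u ∈ S, ∑ v : V, w u v * φ u * φ v * (g u - g v)^2 = E * (a + b) ^ 2 := by
      rw [Finset.sum_congr rfl (fun u hu => by
        rw [split (fun v => w u v * φ u * φ v * (g u - g v)^2),
          Finset.sum_eq_zero (blockSS u hu), zero_add])]
      rw [hE, Finset.sum_mul]
      refine Finset.sum_congr rfl fun u hu => ?_
      rw [Finset.sum_mul]
      refine Finset.sum_congr rfl fun v hv => ?_
      rw [hgS u hu, hgSc v hv]; ring
    have eC : ∑ u ∈ Sᶜ, ∑ v : V, w u v * φ u * φ v * (g u - g v)^2 = E * (a + b) ^ 2 := by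
      rw [Finset.sum_congr rfl (fun u hu => by
        rw [split (fun v => w u v * φ u * φ v * (g u - g v)^2),
          Finset.sum_eq_zero (blockCC u hu), add_zero])]
      rw [Finset.sum_comm, hE, Finset.sum_mul]
      refine Finset.sum_congr rfl fun u hu => ?_
      rw [Finset.sum_mul]
      refine Finset.sum_congr rfl fun v hv => ?_
      rw [hgS u hu, hgSc v hv, hw v u]; ring
    rw [eS, eC]; ring
  refine ⟨h1, ?_, ?_⟩
  · rw [hnum, hden]; ring_nf
  · have hm : 0 < min a b := lt_min hapos hbpos
    have hd : (0:ℝ) < b ^ 2 * a + a ^ 2 * b := by positivity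
    rw [div_le_div_iff₀ hd hm]
    have key : min a b * (a + b) ≤ 2 * (a * b) := by
      nlinarith [mul_le_mul_of_nonneg_right (min_le_left a b) hbpos.le,
        mul_le_mul_of_nonneg_right (min_le_right a b) hapos.le]
    nlinarith [mul_le_mul_of_nonneg_left key (mul_nonneg hEnn (add_pos hapos hbpos).le)]
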